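/- arXiv:math/0005220 — 2 statements merged into one kernel-verified Lean document; each statement's English description precedes it below -/
import Mathlib

section
/- Let A, B ∈ SL(2,ℝ) satisfy tr(A·B·A⁻¹·B⁻¹) = −2, tr A > 2, tr B > 2, tr(A·B) ≥ tr B, and tr A · tr B − tr(A·B) ≥ tr B. Then 1 − 4/(tr A)² ≥ 4/(tr B)² and 4/(tr B)² ≥ 4/(tr A) − 8/(tr A)². -/
/-- The trace of an element of `SL(2,ℝ)`, as the trace of the underlying matrix. -/
def trSL2 (A : Matrix.SpecialLinearGroup (Fin 2) ℝ) : ℝ :=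
  Matrix.trace (A : Matrix (Fin 2) (Fin 2) ℝ)

lemma fricke (A B : Matrix.SpecialLinearGroup (Fin 2) ℝ) :
    trSL2 (A * B * A⁻¹ * B⁻¹) =
      trSL2 A ^ 2 + trSL2 B ^ 2 + trSL2 (A * B) ^ 2
        - trSL2 A * trSL2 B * trSL2 (A * B) - 2 := by
  have hdA : Matrix.det (A : Matrix (Fin 2) (Fin 2) ℝ) = 1 := A.2
  have hdB : Matrix.det (B : Matrix (Fin 2) (Fin 2) ℝ) = 1 := B.2
  rw [Matrix.det_fin_two] at hdA hdB
  simp only [trSL2, Matrix.SpecialLinearGroup.coe_mul, Matrix.SpecialLinearGroup.coe_inv,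
    Matrix.adjugate_fin_two, Matrix.trace_fin_two, Matrix.mul_apply, Fin.sum_univ_two,
    Matrix.of_apply, Matrix.cons_val', Matrix.cons_val_zero, Matrix.cons_val_one,
    Matrix.head_cons, Matrix.empty_val', Matrix.cons_val_fin_one, Matrix.head_fin_const]
  nlinarith [hdA, hdB, sq_nonneg (A 0 0), mul_self_nonneg (A 0 0)]

/-- inequality (2) in the proof of Theorem 4.3 of the paper, in terms of traces:
if `tr[A,B] = −2`, `tr A > 2`, `tr B > 2`, `tr(AB) ≥ tr B` and `trA·trB − tr(AB) ≥ tr B`, then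
`1 − 4/tr²A ≥ 4/tr²B` and `4/tr²B ≥ 4/trA − 8/tr²A`. -/
theorem shortest_generator_trace_bounds (A B : Matrix.SpecialLinearGroup (Fin 2) ℝ)
    (hcomm : trSL2 (A * B * A⁻¹ * B⁻¹) = -2)
    (hA : 2 < trSL2 A) (hB : 2 < trSL2 B)
    (hAB : trSL2 B ≤ trSL2 (A * B))
    (hABinv : trSL2 B ≤ trSL2 A * trSL2 B - trSL2 (A * B)) :
    4 / trSL2 B ^ 2 ≤ 1 - 4 / trSL2 A ^ 2 ∧
      4 / trSL2 A - 8 / trSL2 A ^ 2 ≤ 4 / trSL2 B ^ 2 := by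
  have hfr := fricke A B
  rw [hcomm] at hfr
  set x := trSL2 A
  set y := trSL2 B
  set z := trSL2 (A * B)
  have hx : (0:ℝ) < x := by linarith
  have hy : (0:ℝ) < y := by linarith
  have hid : x ^ 2 + y ^ 2 + z ^ 2 = x * y * z := by linarith
  have key : (0:ℝ) ≤ (z - y) * ((x - 1) * y - z) :=
    mul_nonneg (by linarith) (by linarith)
  have h1 : 4 * x ^ 2 + 4 * y ^ 2 ≤ x ^ 2 * y ^ 2 := by
    nlinarith [sq_nonneg (2 * z - x * y)]
  have h2 : 0 ≤ x ^ 2 - (x - 2) * y ^ 2 := by nlinarith [key]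
  constructor
  · rw [← sub_nonneg]
    have e : 1 - 4 / x ^ 2 - 4 / y ^ 2 = (x ^ 2 * y ^ 2 - 4 * y ^ 2 - 4 * x ^ 2) / (x ^ 2 * y ^ 2) := by
      field_simp
    rw [e]
    apply div_nonneg (by linarith) (by positivity)
  · rw [← sub_nonneg]
    have e : 4 / y ^ 2 - (4 / x - 8 / x ^ 2) = 4 * (x ^ 2 - (x - 2) * y ^ 2) / (x ^ 2 * y ^ 2) := by
      field_simp; ring
    rw [e]
    apply div_nonneg (by linarith) (by positivity)
end

section
/- For every ε > 0 there exists b₀ > 0 such that: for every real b with 0 < b < b₀ and every real x ≥ 1 satisfying 2/cosh(b/2) − 2/cosh(b/2)² ≤ 1/x² ≤ 1 − 1/cosh(b/2)², one has |arccosh x − log(4/b)| < ε. In particular arccosh(x)/log(1/b) → 1 uniformly as b → 0⁺. -/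
set_option maxHeartbeats 1000000

/-- For `0 ≤ t`, `sinh t ≤ t * cosh t`. -/
lemma sinh_le_mul_cosh {t : ℝ} (ht : 0 ≤ t) : Real.sinh t ≤ t * Real.cosh t := by
  have hderiv : ∀ u : ℝ, HasDerivAt (fun v : ℝ => v * Real.cosh v - Real.sinh v)
      (1 * Real.cosh u + u * Real.sinh u - Real.cosh u) u := fun u =>
    ((hasDerivAt_id u).mul (Real.hasDerivAt_cosh u)).sub (Real.hasDerivAt_sinh u)
  have key : MonotoneOn (fun v : ℝ => v * Real.cosh v - Real.sinh v) (Set.Ici 0) := by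
    apply monotoneOn_of_deriv_nonneg (convex_Ici 0)
    · exact ((continuous_id.mul Real.continuous_cosh).sub Real.continuous_sinh).continuousOn
    · intro u _
      exact (hderiv u).differentiableAt.differentiableWithinAt
    · intro u hu
      rw [interior_Ici] at hu
      rw [(hderiv u).deriv]
      have hu' : (0:ℝ) ≤ u := le_of_lt hu
      have := Real.sinh_nonneg_iff.mpr hu'
      nlinarith
  have h0 : (0:ℝ) * Real.cosh 0 - Real.sinh 0 ≤ t * Real.cosh t - Real.sinh t :=
    key (Set.self_mem_Ici) (Set.mem_Ici.mpr ht) ht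
  simp at h0
  linarith

/-- The real inverse hyperbolic cosine, `arccosh x = log (x + √(x² − 1))`
(the inverse of `cosh` on `[1, ∞)`). -/
noncomputable def arccosh (x : ℝ) : ℝ := Real.log (x + Real.sqrt (x ^ 2 - 1))

/-- the asymptotic `ℓ(γ′) ∼ |log ℓ(γ)|` in the proof of Theorem 4.3: for every
`ε > 0` there is `b₀ > 0` such that for all `0 < b < b₀` and all `x ≥ 1` in the sandwich
`2/cosh(b/2) − 2/cosh²(b/2) ≤ 1/x² ≤ 1 − 1/cosh²(b/2)`, one has
`|arccosh x − log(4/b)| < ε`. -/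
theorem arccosh_log_asymptotic (ε : ℝ) (hε : 0 < ε) :
    ∃ b₀ : ℝ, 0 < b₀ ∧ ∀ b : ℝ, 0 < b → b < b₀ → ∀ x : ℝ, 1 ≤ x →
      2 / Real.cosh (b / 2) - 2 / Real.cosh (b / 2) ^ 2 ≤ 1 / x ^ 2 →
      1 / x ^ 2 ≤ 1 - 1 / Real.cosh (b / 2) ^ 2 →
      |arccosh x - Real.log (4 / b)| < ε := by
  refine ⟨2 * ε, by linarith, ?_⟩
  intro b hb hbε x hx h1 h2
  set t : ℝ := b / 4 with ht_def
  have ht : 0 < t := by positivity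
  have hb2 : b / 2 = 2 * t := by rw [ht_def]; ring
  set c : ℝ := Real.cosh (b / 2) with hc_def
  set s : ℝ := Real.sinh (b / 2) with hs_def
  have hcs : c ^ 2 - s ^ 2 = 1 := Real.cosh_sq_sub_sinh_sq (b / 2)
  have hs : 0 < s := Real.sinh_pos_iff.mpr (by positivity)
  have hc1 : 1 < c := Real.one_lt_cosh.mpr (by positivity)
  have hc0 : 0 < c := by linarith
  have hx0 : 0 < x := by linarith
  have hx2 : (0:ℝ) < x ^ 2 := by positivity
  have hc2 : (0:ℝ) < c ^ 2 := by positivity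
  -- small-argument facts
  have hsht : 0 < Real.sinh t := Real.sinh_pos_iff.mpr ht
  have hcht : 0 < Real.cosh t := Real.cosh_pos t
  have hcht1 : Real.cosh t ^ 2 - Real.sinh t ^ 2 = 1 := Real.cosh_sq_sub_sinh_sq t
  have hc_eq : c = Real.cosh t ^ 2 + Real.sinh t ^ 2 := by
    rw [hc_def, hb2]; exact Real.cosh_two_mul t
  have hs_eq : s = 2 * Real.sinh t * Real.cosh t := by
    rw [hs_def, hb2]; exact Real.sinh_two_mul t
  -- lower bound part: x + sqrt(x^2-1) ≥ (c+1)/s ≥ 4/b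
  have h2' : c ^ 2 ≤ x ^ 2 * s ^ 2 := by
    have e : 1 - 1 / c ^ 2 = s ^ 2 / c ^ 2 := by field_simp; linarith
    rw [e] at h2
    have := (div_le_div_iff₀ hx2 hc2).mp h2
    nlinarith
  have hxs : c ≤ x * s := by nlinarith [mul_pos hx0 hs]
  have hsqrt_lb : 1 / s ≤ Real.sqrt (x ^ 2 - 1) := by
    rw [show (1:ℝ) / s = Real.sqrt ((1 / s) ^ 2) from (Real.sqrt_sq (by positivity)).symm]
    apply Real.sqrt_le_sqrt
    rw [div_pow, one_pow, div_le_iff₀ (by positivity)]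
    nlinarith
  have hx_lb : c / s ≤ x := by rw [div_le_iff₀ hs]; exact hxs
  have hsum_lb : (c + 1) / s ≤ x + Real.sqrt (x ^ 2 - 1) := by
    have : (c + 1) / s = c / s + 1 / s := by ring
    rw [this]; exact add_le_add hx_lb hsqrt_lb
  have hcoth : 4 / b ≤ (c + 1) / s := by
    have hnum : c + 1 = 2 * Real.cosh t * Real.cosh t := by rw [hc_eq]; nlinarith
    have e : (c + 1) / s = Real.cosh t / Real.sinh t := by
      rw [hnum, hs_eq, show 2 * Real.sinh t * Real.cosh t = 2 * Real.cosh t * Real.sinh t by ring,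
        mul_div_mul_left _ _ (by positivity : (2 * Real.cosh t) ≠ 0)]
    rw [e, div_le_div_iff₀ (by positivity) hsht]
    nlinarith [sinh_le_mul_cosh ht.le, hcht]
  -- upper bound part: x + sqrt(x^2-1) ≤ 2x ≤ c / sinh t < exp(2t)/t
  have h1' : x ^ 2 * (2 * c - 2) ≤ c ^ 2 := by
    have e : 2 / c - 2 / c ^ 2 = (2 * c - 2) / c ^ 2 := by field_simp
    rw [e] at h1
    have := (div_le_div_iff₀ hc2 hx2).mp h1
    nlinarith
  have h2c2 : 2 * c - 2 = 4 * Real.sinh t ^ 2 := by rw [hc_eq]; nlinarith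
  have hx_ub : x ≤ c / (2 * Real.sinh t) := by
    rw [le_div_iff₀ (by positivity)]
    nlinarith [mul_pos hx0 hsht, mul_pos (mul_pos hx0 hsht) (mul_pos hx0 hsht)]
  have hsqrt_ub : Real.sqrt (x ^ 2 - 1) ≤ x := by
    calc Real.sqrt (x ^ 2 - 1) ≤ Real.sqrt (x ^ 2) := Real.sqrt_le_sqrt (by linarith)
      _ = x := Real.sqrt_sq hx0.le
  have ht_le : t ≤ Real.sinh t := Real.self_le_sinh_iff.mpr ht.le
  have hc_lt : c < Real.exp (2 * t) := by
    rw [hc_def, hb2, Real.cosh_eq]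
    have : Real.exp (-(2 * t)) < Real.exp (2 * t) := Real.exp_lt_exp.mpr (by linarith)
    linarith
  have hsum_ub : x + Real.sqrt (x ^ 2 - 1) < Real.exp ε * (4 / b) := by
    have h2x : x + Real.sqrt (x ^ 2 - 1) ≤ c / Real.sinh t := by
      have : x + Real.sqrt (x ^ 2 - 1) ≤ 2 * x := by linarith
      calc x + Real.sqrt (x ^ 2 - 1) ≤ 2 * x := this
        _ ≤ c / Real.sinh t := by
            rw [le_div_iff₀ hsht]
            have := hx_ub
            rw [le_div_iff₀ (by positivity)] at this
            linarith
    have hct : c / Real.sinh t ≤ c / t := by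
      apply div_le_div_of_nonneg_left hc0.le ht ht_le
    have h4b : 4 / b = 1 / t := by rw [ht_def]; field_simp
    have hexp : Real.exp (2 * t) < Real.exp ε := Real.exp_lt_exp.mpr (by rw [ht_def]; linarith)
    calc x + Real.sqrt (x ^ 2 - 1) ≤ c / Real.sinh t := h2x
      _ ≤ c / t := hct
      _ < Real.exp (2 * t) / t := div_lt_div_of_pos_right hc_lt ht
      _ < Real.exp ε / t := div_lt_div_of_pos_right hexp ht
      _ = Real.exp ε * (4 / b) := by rw [h4b]; ring
  -- conclude
  have hpos : 0 < x + Real.sqrt (x ^ 2 - 1) := by positivity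
  have h4bpos : (0:ℝ) < 4 / b := by positivity
  have hlog_lb : Real.log (4 / b) ≤ arccosh x := by
    apply Real.log_le_log h4bpos
    linarith
  have hlog_ub : arccosh x < ε + Real.log (4 / b) := by
    have := Real.log_lt_log hpos hsum_ub
    rwa [Real.log_mul (Real.exp_pos ε).ne' (ne_of_gt h4bpos), Real.log_exp] at this
  rw [abs_lt]
  constructor <;> [skip; linarith]
  unfold arccosh at hlog_lb ⊢
  linarith
end
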